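/- Let (S,M) be a representation of a semigroup S on a set M, a ∈ S, and α,β ∈ S¹ with βα = a. The induced representation (S_a, M; α, β) is faithful if and only if (S,M) is faithful, α is left cancellable, and β is right cancellable. -/

import Mathlib

/-- Any product `x * ↑s * y` in `S¹ = WithOne S` with middle factor in `S` lies in `S`. -/
theorem exists_coe_eq {S : Type*} [Semigroup S] (x y : WithOne S) (s : S) :
    ∃ z : S, (z : WithOne S) = x * ↑s * y := by
  induction x using WithOne.recOneCoe with
  | one => induction y using WithOne.recOneCoe with
    | one => exact ⟨s, by simp⟩
    | coe b => exact ⟨s * b, by simp⟩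
  | coe a => induction y using WithOne.recOneCoe with
    | one => exact ⟨a * s, by simp⟩
    | coe b => exact ⟨a * s * b, by simp [mul_assoc]⟩

/-- The element `x s y ∈ S` for `x, y ∈ S¹`, `s ∈ S`. -/
noncomputable def sand3 {S : Type*} [Semigroup S] (x : WithOne S) (s : S) (y : WithOne S) : S :=
  (exists_coe_eq x y s).choose

theorem sand3_spec {S : Type*} [Semigroup S] (x : WithOne S) (s : S) (y : WithOne S) :
    (↑(sand3 x s y) : WithOne S) = x * ↑s * y :=
  (exists_coe_eq x y s).choose_spec

/-- `sand b c s = b s c ∈ S` for `b, c ∈ S¹`, `s ∈ S`. -/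
noncomputable def sand {S : Type*} [Semigroup S] (b c : WithOne S) (s : S) : S := sand3 b s c

/-- Act by an element of `S¹` (identity for `1`). -/
def optAct {S M : Type*} (act : M → S → M) (m : M) (x : WithOne S) : M :=
  WithOne.recOneCoe m (act m) x

@[simp] theorem optAct_one {S M : Type*} (act : M → S → M) (m : M) :
    optAct act m (1 : WithOne S) = m := rfl

@[simp] theorem optAct_coe {S M : Type*} (act : M → S → M) (m : M) (u : S) :
    optAct act m (u : WithOne S) = act m u := rfl

theorem act_sand3 {S M : Type*} [Semigroup S] (act : M → S → M)
    (hact : ∀ (m : M) (s t : S), act m (s * t) = act (act m s) t)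
    (m : M) (x : WithOne S) (s : S) (y : WithOne S) :
    act m (sand3 x s y) = optAct act (act (optAct act m x) s) y := by
  induction x using WithOne.recOneCoe with
  | one => induction y using WithOne.recOneCoe with
    | one =>
      have h := sand3_spec (1 : WithOne S) s (1 : WithOne S)
      simp only [one_mul, mul_one] at h
      rw [WithOne.coe_inj.mp h]; rfl
    | coe b =>
      have h := sand3_spec (1 : WithOne S) s (b : WithOne S)
      simp only [one_mul, ← WithOne.coe_mul] at h
      rw [WithOne.coe_inj.mp h]; simp [hact]
  | coe a => induction y using WithOne.recOneCoe with
    | one =>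
      have h := sand3_spec (a : WithOne S) s (1 : WithOne S)
      simp only [mul_one, ← WithOne.coe_mul] at h
      rw [WithOne.coe_inj.mp h]; simp [hact]
    | coe b =>
      have h := sand3_spec (a : WithOne S) s (b : WithOne S)
      simp only [← WithOne.coe_mul] at h
      rw [WithOne.coe_inj.mp h]; simp [hact]

/-- The induced representation `(S_a, M; α, β)`, `m ∗ s = m · (α s β)`, is faithful iff
`(S, M)` is faithful, `α` is left cancellable and `β` is right cancellable. -/
theorem induced_faithful_iff {S M : Type*} [Semigroup S]
    (act : M → S → M) (hact : ∀ (m : M) (s t : S), act m (s * t) = act (act m s) t)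
    (a : S) (α β : WithOne S) (hβα : β * α = (a : WithOne S)) :
    (∀ s t : S, (∀ m : M, act m (sand α β s) = act m (sand α β t)) → s = t) ↔
      ((∀ s t : S, (∀ m : M, act m s = act m t) → s = t) ∧
        (∀ s t : S, α * ↑s = α * ↑t → s = t) ∧
        (∀ s t : S, ↑s * β = ↑t * β → s = t)) := by
  constructor
  · intro h
    have key : ∀ s t : S, (α * ↑s * β = α * ↑t * β) → s = t := by
      intro s t hst
      apply h s t
      intro m
      have : sand α β s = sand α β t := by
        apply WithOne.coe_inj.mp
        rw [show sand α β s = sand3 α s β from rfl, show sand α β t = sand3 α t β from rfl,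
          sand3_spec, sand3_spec, hst]
      rw [this]
    refine ⟨?_, ?_, ?_⟩
    · intro s t hst
      apply h s t
      intro m
      rw [show sand α β s = sand3 α s β from rfl, show sand α β t = sand3 α t β from rfl,
        act_sand3 act hact, act_sand3 act hact, hst]
    · intro s t hst
      exact key s t (by rw [hst])
    · intro s t hst
      exact key s t (by rw [mul_assoc, mul_assoc, hst])
  · rintro ⟨hfaith, hα, hβ⟩ s t hst
    have heq : sand α β s = sand α β t := hfaith _ _ hst
    have heq' : α * ↑s * β = α * ↑t * β := by
      rw [← sand3_spec α s β, ← sand3_spec α t β]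
      exact_mod_cast heq
    induction α using WithOne.recOneCoe with
    | one =>
      simp only [one_mul] at heq'
      exact hβ s t heq'
    | coe u =>
      have : (↑(u * s) : WithOne S) * β = ↑(u * t) * β := by
        push_cast
        simpa using heq'
      have hu : u * s = u * t := hβ _ _ this
      exact hα s t (by rw [← WithOne.coe_mul, ← WithOne.coe_mul, hu])
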